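/- Let μ⁻, μ⁺ be probability measures on ℝ^d with compact supports X⁻, X⁺ and let c : X⁻ × X⁺ → ℝ be continuous. For every ε > 0, if γ_ε is a coupling of μ⁻ and μ⁺ attaining the infimum defining v_ε, then the function ε ↦ v_ε is differentiable at ε with derivative v'_ε = Ent(γ_ε | μ⁻⊗μ⁺). -/

import Mathlib

open MeasureTheory Real Set Filter Classical
open scoped ENNReal NNReal Topology

noncomputable section

/-- Relative entropy (Kullback–Leibler divergence) `Ent(γ | q)`, with values in `EReal`:
it equals `∫ ρ log ρ dq` if `γ = ρ·q` (with `ρ log ρ` integrable) and `+∞` otherwise. -/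
def Ent {α : Type*} [MeasurableSpace α] (γ q : Measure α) : EReal :=
  if γ ≪ q ∧ Integrable (fun x => ((γ.rnDeriv q) x).toReal * Real.log ((γ.rnDeriv q) x).toReal) q
  then ((∫ x, ((γ.rnDeriv q) x).toReal * Real.log ((γ.rnDeriv q) x).toReal ∂q : ℝ) : EReal)
  else ⊤

/-- Entropic optimal transport cost
`v_ε = inf { ∫ c dγ + ε Ent(γ | μ⁻ ⊗ μ⁺) : γ coupling of μ⁻ and μ⁺ }`. -/
def entCost {α β : Type*} [MeasurableSpace α] [MeasurableSpace β]
    (μm : Measure α) (μp : Measure β) (c : α × β → ℝ) (ε : ℝ) : EReal :=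
  sInf {v : EReal | ∃ γ : Measure (α × β), IsProbabilityMeasure γ ∧ γ.fst = μm ∧ γ.snd = μp ∧
    v = ((∫ p, c p ∂γ : ℝ) : EReal) + (ε : EReal) * Ent γ (μm.prod μp)}

/-- Support of a measure: the set of points all of whose open neighbourhoods have
positive measure. -/
def msupport {α : Type*} [TopologicalSpace α] [MeasurableSpace α] (μ : Measure α) : Set α :=
  {x | ∀ U : Set α, IsOpen U → x ∈ U → μ U ≠ 0}

lemma compl_msupport_eq {α : Type*} [TopologicalSpace α] [MeasurableSpace α] (μ : Measure α) :
    (msupport μ)ᶜ = ⋃₀ {U : Set α | IsOpen U ∧ μ U = 0} := by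
  ext x
  simp only [msupport, mem_compl_iff, mem_setOf_eq, mem_sUnion]
  push_neg
  constructor
  · rintro ⟨U, hU, hx, hμ⟩; exact ⟨U, ⟨hU, hμ⟩, hx⟩
  · rintro ⟨U, ⟨hU, hμ⟩, hx⟩; exact ⟨U, hU, hx, hμ⟩

lemma isClosed_msupport {α : Type*} [TopologicalSpace α] [MeasurableSpace α] (μ : Measure α) :
    IsClosed (msupport μ) := by
  rw [← isOpen_compl_iff, compl_msupport_eq]
  exact isOpen_sUnion fun U hU => hU.1

lemma measure_compl_msupport {α : Type*} [TopologicalSpace α] [MeasurableSpace α]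
    [SecondCountableTopology α] (μ : Measure α) : μ (msupport μ)ᶜ = 0 := by
  rw [compl_msupport_eq]
  obtain ⟨T, hTS, hTc, hTU⟩ := TopologicalSpace.isOpen_sUnion_countable
    {U : Set α | IsOpen U ∧ μ U = 0} (fun U hU => hU.1)
  rw [← hTU, measure_sUnion_null_iff hTS]
  exact fun s hs => (hTc hs).2

lemma mul_log_ge_neg_one {y : ℝ} (hy : 0 ≤ y) : -1 ≤ y * Real.log y := by
  rcases eq_or_lt_of_le hy with h | h
  · simp [← h]
  · have h1 := Real.one_sub_inv_le_log_of_pos h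
    have h3 : y * (1 - y⁻¹) ≤ y * Real.log y := mul_le_mul_of_nonneg_left h1 hy
    have h2 : y * (1 - y⁻¹) = y - 1 := by field_simp
    rw [h2] at h3
    linarith

lemma two_sub_le_log {x : ℝ} (hx : 0 < x) : 2 - 2 / Real.sqrt x ≤ Real.log x := by
  have hs : 0 < Real.sqrt x := Real.sqrt_pos.2 hx
  have h1 := Real.one_sub_inv_le_log_of_pos hs
  rw [Real.log_sqrt hx.le] at h1
  rw [div_eq_mul_inv]
  linarith

/-- Key pointwise strong-convexity inequality for `φ(x) = x log x`. -/
lemma phi_gap_aux {a b : ℝ} (hb : 0 ≤ b) (hba : b ≤ a) (hs : 0 < a + b) :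
    (a - b) ^ 2 ≤ 24 * ((a * Real.log a + b * Real.log b) / 2
      - ((a + b) / 2) * Real.log ((a + b) / 2)) * (a + b) := by
  set s := a + b with hsdef
  have ha : 0 < a := by nlinarith
  have hs2 : 0 < s / 2 := by linarith
  set w := Real.sqrt (a * s / 2) with hw
  have hw0 : 0 ≤ w := Real.sqrt_nonneg _
  have hw2 : w ^ 2 = a * s / 2 := Real.sq_sqrt (by positivity)
  -- bound for the a-term
  have hlog_a : Real.log a - Real.log (s / 2) = Real.log (a / (s / 2)) :=
    (Real.log_div ha.ne' hs2.ne').symm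
  have hx : 0 < a / (s / 2) := by positivity
  have h2a : 2 - 2 / Real.sqrt (a / (s / 2)) ≤ Real.log (a / (s / 2)) := two_sub_le_log hx
  have hsqrt_eq : a / Real.sqrt (a / (s / 2)) = w := by
    rw [hw]
    rw [show a * s / 2 = a ^ 2 / (a / (s / 2)) by field_simp]
    rw [Real.sqrt_div (sq_nonneg a), Real.sqrt_sq ha.le]
  have hA : 2 * a - 2 * w ≤ a * (Real.log a - Real.log (s / 2)) := by
    rw [hlog_a]
    have := mul_le_mul_of_nonneg_left h2a ha.le
    have hrw : a * (2 - 2 / Real.sqrt (a / (s / 2))) = 2 * a - 2 * w := by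
      rw [mul_sub, mul_div_assoc' a 2 _, mul_comm a 2, mul_div_assoc 2 a, hsqrt_eq]
    rw [hrw] at this
    linarith
  -- bound for the b-term
  have hB : b - s / 2 ≤ b * (Real.log b - Real.log (s / 2)) := by
    rcases eq_or_lt_of_le hb with h0 | h0
    · simp [← h0]; linarith
    · have hlog_b : Real.log b - Real.log (s / 2) = Real.log (b / (s / 2)) :=
        (Real.log_div h0.ne' hs2.ne').symm
      have h1 := Real.one_sub_inv_le_log_of_pos (show (0:ℝ) < b / (s / 2) by positivity)
      rw [hlog_b]
      have h2 := mul_le_mul_of_nonneg_left h1 h0.le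
      have heq : b * (1 - (b / (s / 2))⁻¹) = b - s / 2 := by field_simp
      rw [heq] at h2
      linarith
  -- gap lower bound
  have hgap : 2 * a + b - s / 2 - 2 * w ≤ 2 * ((a * Real.log a + b * Real.log b) / 2
      - (s / 2) * Real.log (s / 2)) := by
    have expand : 2 * ((a * Real.log a + b * Real.log b) / 2 - (s / 2) * Real.log (s / 2))
        = a * (Real.log a - Real.log (s / 2)) + b * (Real.log b - Real.log (s / 2)) := by
      rw [hsdef]; ring
    rw [expand]; linarith
  -- algebraic conclusion
  have h4w : 4 * w ≤ 2 * a + s := by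
    have h1 : a * s / 2 ≤ ((2 * a + s) / 4) ^ 2 := by nlinarith [sq_nonneg (2 * a - s)]
    have h2 : w ≤ (2 * a + s) / 4 := by
      rw [hw]
      calc Real.sqrt (a * s / 2) ≤ Real.sqrt (((2 * a + s) / 4) ^ 2) := Real.sqrt_le_sqrt h1
        _ = (2 * a + s) / 4 := Real.sqrt_sq (by linarith)
    linarith
  have hf2 : 0 ≤ 5 * s - 2 * a - 4 * w := by nlinarith
  have hf1 : 0 ≤ 2 * a + s - 4 * w := by linarith
  have hprod : 0 ≤ (2 * a + s - 4 * w) * (5 * s - 2 * a - 4 * w) := mul_nonneg hf1 hf2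
  nlinarith [mul_le_mul_of_nonneg_right hgap (le_of_lt hs)]

lemma phi_gap {a b : ℝ} (ha : 0 ≤ a) (hb : 0 ≤ b) :
    (a - b) ^ 2 ≤ 24 * ((a * Real.log a + b * Real.log b) / 2
      - ((a + b) / 2) * Real.log ((a + b) / 2)) * (a + b) := by
  rcases eq_or_lt_of_le (by positivity : (0:ℝ) ≤ a + b) with h0 | h0
  · have ha0 : a = 0 := by linarith
    have hb0 : b = 0 := by linarith
    simp [ha0, hb0]
  · rcases le_total b a with h | h
    · exact phi_gap_aux hb h h0
    · have := phi_gap_aux ha h (by linarith)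
      calc (a - b)^2 = (b - a)^2 := by ring
        _ ≤ _ := by rw [show b + a = a + b by ring, show b * Real.log b + a * Real.log a
              = a * Real.log a + b * Real.log b by ring] at this; exact this

lemma phi_gap_nonneg {a b : ℝ} (ha : 0 ≤ a) (hb : 0 ≤ b) :
    0 ≤ (a * Real.log a + b * Real.log b) / 2 - ((a + b) / 2) * Real.log ((a + b) / 2) := by
  rcases eq_or_lt_of_le (by positivity : (0:ℝ) ≤ a + b) with h0 | h0
  · have ha0 : a = 0 := by linarith
    have hb0 : b = 0 := by linarith
    simp [ha0, hb0]
  · have := phi_gap ha hb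
    nlinarith [sq_nonneg (a - b)]

/-- Cauchy–Schwarz for integrals. -/
lemma integral_cauchy_schwarz {α : Type*} [MeasurableSpace α] (μ : Measure α) {F G : α → ℝ}
    (hF2 : Integrable (fun x => F x ^ 2) μ) (hG2 : Integrable (fun x => G x ^ 2) μ)
    (hFG : Integrable (fun x => F x * G x) μ) :
    (∫ x, F x * G x ∂μ) ^ 2 ≤ (∫ x, F x ^ 2 ∂μ) * (∫ x, G x ^ 2 ∂μ) := by
  set A := ∫ x, F x ^ 2 ∂μ
  set B := ∫ x, F x * G x ∂μ
  set C := ∫ x, G x ^ 2 ∂μ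
  have key : ∀ t : ℝ, 0 ≤ A * (t * t) + (-2 * B) * t + C := by
    intro t
    have h0 : 0 ≤ ∫ x, (t * F x - G x) ^ 2 ∂μ :=
      integral_nonneg fun x => sq_nonneg _
    have hexp : ∫ x, (t * F x - G x) ^ 2 ∂μ = t ^ 2 * A - 2 * t * B + C := by
      calc ∫ x, (t * F x - G x) ^ 2 ∂μ
          = ∫ x, (t ^ 2 * F x ^ 2 - 2 * t * (F x * G x)) + G x ^ 2 ∂μ := by
            congr 1; funext x; ring
        _ = (∫ x, t ^ 2 * F x ^ 2 - 2 * t * (F x * G x) ∂μ) + C :=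
            integral_add ((hF2.const_mul _).sub (hFG.const_mul _)) hG2
        _ = ((∫ x, t ^ 2 * F x ^ 2 ∂μ) - ∫ x, 2 * t * (F x * G x) ∂μ) + C := by
            rw [integral_sub (hF2.const_mul _) (hFG.const_mul _)]
        _ = t ^ 2 * A - 2 * t * B + C := by rw [integral_const_mul, integral_const_mul]
    rw [hexp] at h0
    nlinarith
  have := discrim_le_zero key
  rw [discrim] at this
  nlinarith



lemma coupling_compl_null {α β : Type*} [TopologicalSpace α] [TopologicalSpace β]
    [MeasurableSpace α] [MeasurableSpace β] [OpensMeasurableSpace α] [OpensMeasurableSpace β]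
    [SecondCountableTopology α] [SecondCountableTopology β]
    {μm : Measure α} {μp : Measure β} (γ : Measure (α × β))
    (hfst : γ.fst = μm) (hsnd : γ.snd = μp) :
    γ ((msupport μm ×ˢ msupport μp)ᶜ) = 0 := by
  have h1 : γ (Prod.fst ⁻¹' (msupport μm)ᶜ) = 0 := by
    rw [← Measure.fst_apply (isClosed_msupport μm).measurableSet.compl, hfst]
    exact measure_compl_msupport μm
  have h2 : γ (Prod.snd ⁻¹' (msupport μp)ᶜ) = 0 := by
    rw [← Measure.snd_apply (isClosed_msupport μp).measurableSet.compl, hsnd]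
    exact measure_compl_msupport μp
  refine measure_mono_null ?_ (measure_union_null h1 h2)
  intro x hx
  simp only [mem_compl_iff, mem_prod, not_and_or] at hx
  simp only [mem_union, mem_preimage, mem_compl_iff]
  exact hx


set_option maxHeartbeats 2000000 in
/-- For `ε > 0`, if `γ_ε` attains the infimum defining `v_ε`, then `ε ↦ v_ε` is differentiable
at `ε` with derivative `Ent(γ_ε | μ⁻ ⊗ μ⁺)`. -/
theorem entCost_hasDerivAt {d : ℕ}
    (μm μp : Measure (EuclideanSpace ℝ (Fin d)))
    [IsProbabilityMeasure μm] [IsProbabilityMeasure μp]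
    (hXm : IsCompact (msupport μm)) (hXp : IsCompact (msupport μp))
    (c : EuclideanSpace ℝ (Fin d) × EuclideanSpace ℝ (Fin d) → ℝ)
    (hc : ContinuousOn c (msupport μm ×ˢ msupport μp))
    (ε : ℝ) (hε : 0 < ε)
    (γε : Measure (EuclideanSpace ℝ (Fin d) × EuclideanSpace ℝ (Fin d)))
    (hprob : IsProbabilityMeasure γε) (hfst : γε.fst = μm) (hsnd : γε.snd = μp)
    (hopt : ((∫ p, c p ∂γε : ℝ) : EReal) + (ε : EReal) * Ent γε (μm.prod μp)
      = entCost μm μp c ε) :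
    HasDerivAt (fun t : ℝ => (entCost μm μp c t).toReal)
      ((Ent γε (μm.prod μp)).toReal) ε := by
  haveI := hprob
  set q : Measure (EuclideanSpace ℝ (Fin d) × EuclideanSpace ℝ (Fin d)) := μm.prod μp with hq
  haveI hqprob : IsProbabilityMeasure q := by rw [hq]; infer_instance
  set K : Set (EuclideanSpace ℝ (Fin d) × EuclideanSpace ℝ (Fin d)) :=
    msupport μm ×ˢ msupport μp with hKdef
  have hKcl : IsClosed K := (isClosed_msupport μm).prod (isClosed_msupport μp)
  obtain ⟨M0, hM0⟩ := (hXm.prod hXp).exists_bound_of_continuousOn hc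
  set M := max M0 0 with hM
  have hMnn : (0:ℝ) ≤ M := le_max_right _ _
  have hbound : ∀ x ∈ K, |c x| ≤ M := fun x hx => by
    have := hM0 x hx; rw [Real.norm_eq_abs] at this; exact this.trans (le_max_left _ _)
  -- membership in K a.e. for couplings
  have hmemK : ∀ γ : Measure (EuclideanSpace ℝ (Fin d) × EuclideanSpace ℝ (Fin d)),
      γ.fst = μm → γ.snd = μp → ∀ᵐ x ∂γ, x ∈ K := by
    intro γ h1 h2
    rw [ae_iff]
    exact coupling_compl_null γ h1 h2
  -- integrability of c
  have hcae : ∀ γ : Measure (EuclideanSpace ℝ (Fin d) × EuclideanSpace ℝ (Fin d)),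
      γ.fst = μm → γ.snd = μp → AEStronglyMeasurable c γ := by
    intro γ h1 h2
    rw [← Measure.restrict_eq_self_of_ae_mem (hmemK γ h1 h2)]
    exact hc.aestronglyMeasurable hKcl.measurableSet
  have hcint : ∀ γ : Measure (EuclideanSpace ℝ (Fin d) × EuclideanSpace ℝ (Fin d)),
      IsProbabilityMeasure γ → γ.fst = μm → γ.snd = μp → Integrable c γ := by
    intro γ hγ h1 h2
    refine Integrable.mono' (integrable_const M) (hcae γ h1 h2) ?_
    filter_upwards [hmemK γ h1 h2] with x hx
    rw [Real.norm_eq_abs]; exact hbound x hx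
  -- Ent q q = 0
  have hEntqq : Ent q q = (0 : EReal) := by
    have hae : (fun x => ((q.rnDeriv q) x).toReal * Real.log ((q.rnDeriv q) x).toReal)
        =ᵐ[q] (fun _ => (0:ℝ)) := by
      filter_upwards [Measure.rnDeriv_self q] with x hx
      rw [hx]; simp
    rw [Ent, if_pos ⟨Measure.AbsolutelyContinuous.rfl,
      (integrable_congr hae).2 (integrable_zero _ _ _)⟩]
    rw [integral_congr_ae hae, integral_zero]
    rfl
  -- basic inequality: entCost ≤ value at any coupling
  have hle : ∀ (t : ℝ) (γ : Measure (EuclideanSpace ℝ (Fin d) × EuclideanSpace ℝ (Fin d))),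
      IsProbabilityMeasure γ → γ.fst = μm → γ.snd = μp →
      entCost μm μp c t ≤ ((∫ p, c p ∂γ : ℝ) : EReal) + (t : EReal) * Ent γ q := by
    intro t γ h1 h2 h3
    exact sInf_le ⟨γ, h1, h2, h3, rfl⟩
  -- finiteness of Ent γε q
  have hvle : entCost μm μp c ε ≤ ((∫ p, c p ∂q : ℝ) : EReal) := by
    have h := hle ε q hqprob Measure.fst_prod Measure.snd_prod
    rwa [hEntqq, mul_zero, add_zero] at h
  have hEntne : Ent γε q ≠ ⊤ := by
    intro htop
    rw [htop, EReal.mul_top_of_pos (by exact_mod_cast hε), EReal.coe_add_top] at hopt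
    rw [← hopt] at hvle
    exact absurd ((EReal.coe_lt_top _).trans_le hvle) (lt_irrefl _)
  have hcondε : γε ≪ q ∧ Integrable
      (fun x => ((γε.rnDeriv q) x).toReal * Real.log ((γε.rnDeriv q) x).toReal) q := by
    by_contra h
    exact hEntne (by rw [Ent, if_neg h])
  obtain ⟨hacε, hφεint⟩ := hcondε
  set fε := fun x => ((γε.rnDeriv q) x).toReal with hfεdef
  set EεR := ∫ x, fε x * Real.log (fε x) ∂q with hEεRdef
  have hEntε : Ent γε q = (EεR : EReal) := by rw [Ent, if_pos ⟨hacε, hφεint⟩]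
  set Cε := ∫ p, c p ∂γε with hCεdef
  have hveps : entCost μm μp c ε = ((Cε + ε * EεR : ℝ) : EReal) := by
    rw [← hopt, hEntε, EReal.coe_add, EReal.coe_mul]
  -- THE KEY ESTIMATE
  have key : ∀ t : ℝ, |t - ε| ≤ ε / 2 →
      (((Cε + ε * EεR) + (t - ε) * EεR - (12 * M ^ 2 / ε ^ 3) * (t - ε) ^ 2 : ℝ) : EReal)
        ≤ entCost μm μp c t ∧
      entCost μm μp c t ≤ (((Cε + ε * EεR) + (t - ε) * EεR : ℝ) : EReal) := by
    intro t ht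
    obtain ⟨ht1, ht2⟩ := abs_le.1 ht
    have htpos : 0 < t := by linarith
    constructor
    · -- LOWER BOUND
      rw [entCost]
      apply le_sInf
      rintro v ⟨γ, hγp, hγf, hγs, rfl⟩
      haveI := hγp
      rw [← hq]
      by_cases hfin : Ent γ q = ⊤
      · rw [hfin, EReal.mul_top_of_pos (by exact_mod_cast htpos), EReal.coe_add_top]
        exact le_top
      have hcond : γ ≪ q ∧ Integrable
          (fun x => ((γ.rnDeriv q) x).toReal * Real.log ((γ.rnDeriv q) x).toReal) q := by
        by_contra h
        exact hfin (by rw [Ent, if_neg h])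
      obtain ⟨hac, hφint⟩ := hcond
      set f := fun x => ((γ.rnDeriv q) x).toReal with hfdef
      set Eg := ∫ x, f x * Real.log (f x) ∂q with hEgdef
      have hEntγ : Ent γ q = (Eg : EReal) := by rw [Ent, if_pos ⟨hac, hφint⟩]
      set Cγ := ∫ p, c p ∂γ with hCγdef
      rw [hEntγ, ← EReal.coe_mul, ← EReal.coe_add, EReal.coe_le_coe_iff]
      -- now a pure real inequality
      -- basic facts about densities
      have hfmeas : Measurable f := (Measure.measurable_rnDeriv γ q).ennreal_toReal
      have hfεmeas : Measurable fε := (Measure.measurable_rnDeriv γε q).ennreal_toReal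
      have hf0 : ∀ x, 0 ≤ f x := fun _ => ENNReal.toReal_nonneg
      have hfε0 : ∀ x, 0 ≤ fε x := fun _ => ENNReal.toReal_nonneg
      have hfint : Integrable f q := Measure.integrable_toReal_rnDeriv
      have hfεint : Integrable fε q := Measure.integrable_toReal_rnDeriv
      have hintf : ∫ x, f x ∂q = 1 := by
        rw [Measure.integral_toReal_rnDeriv hac, probReal_univ]
      have hintfε : ∫ x, fε x ∂q = 1 := by
        rw [Measure.integral_toReal_rnDeriv hacε, probReal_univ]
      -- q-a.e. bound for c
      have hqfst : q.fst = μm := Measure.fst_prod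
      have hqsnd : q.snd = μp := Measure.snd_prod
      have hqK : ∀ᵐ x ∂q, x ∈ K := hmemK q hqfst hqsnd
      have hcbdq : ∀ᵐ x ∂q, |c x| ≤ M := by
        filter_upwards [hqK] with x hx using hbound x hx
      -- cost as density integrals
      have hCγq : Cγ = ∫ x, f x * c x ∂q := by
        rw [hCγdef, ← integral_rnDeriv_smul hac (f := c)]
        simp only [smul_eq_mul]
        rfl
      have hCεq : Cε = ∫ x, fε x * c x ∂q := by
        rw [hCεdef, ← integral_rnDeriv_smul hacε (f := c)]
        simp only [smul_eq_mul]
        rfl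
      have hfcint : Integrable (fun x => f x * c x) q := by
        have := (integrable_rnDeriv_smul_iff hac (f := c)).2 (hcint γ hγp hγf hγs)
        simpa only [smul_eq_mul] using this
      have hfεcint : Integrable (fun x => fε x * c x) q := by
        have := (integrable_rnDeriv_smul_iff hacε (f := c)).2 (hcint γε hprob hfst hsnd)
        simpa only [smul_eq_mul] using this
      -- total variation-type quantity
      set T := ∫ x, |f x - fε x| ∂q with hTdef
      have hTnn : 0 ≤ T := integral_nonneg fun x => abs_nonneg _
      have habsint : Integrable (fun x => |f x - fε x|) q := (hfint.sub hfεint).abs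
      have hsub_eq : (fun x => f x * c x - fε x * c x) = fun x => (f x - fε x) * c x :=
        funext fun x => by ring
      have hfccint : Integrable (fun x => (f x - fε x) * c x) q :=
        (hfcint.sub hfεcint).congr (ae_of_all _ fun x => by simp only [Pi.sub_apply]; ring)
      have hDbound : |Cγ - Cε| ≤ M * T := by
        rw [hCγq, hCεq, ← integral_sub hfcint hfεcint,
          integral_congr_ae (ae_of_all _ fun x =>
            show f x * c x - fε x * c x = (f x - fε x) * c x by ring)]
        calc |∫ x, (f x - fε x) * c x ∂q| ≤ ∫ x, |(f x - fε x) * c x| ∂q := by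
              have h := norm_integral_le_integral_norm (μ := q)
                (f := fun x => (f x - fε x) * c x)
              simp only [Real.norm_eq_abs] at h
              exact h
          _ ≤ ∫ x, M * |f x - fε x| ∂q := by
              refine integral_mono_ae hfccint.abs (habsint.const_mul M) ?_
              filter_upwards [hcbdq] with x hx
              rw [abs_mul]
              calc |f x - fε x| * |c x| ≤ |f x - fε x| * M :=
                    mul_le_mul_of_nonneg_left hx (abs_nonneg _)
                _ = M * |f x - fε x| := by ring
          _ = M * T := by rw [integral_const_mul]
      -- optimality of γε at ε
      have hΔ : 0 ≤ (Cγ + ε * Eg) - (Cε + ε * EεR) := by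
        have h := hle ε γ hγp hγf hγs
        rw [hveps, hEntγ, ← EReal.coe_mul, ← EReal.coe_add, EReal.coe_le_coe_iff] at h
        linarith
      -- the midpoint measure
      set ρm := fun x => (γ.rnDeriv q x + γε.rnDeriv q x) / 2 with hρmdef
      have hρm_meas : Measurable ρm :=
        ((Measure.measurable_rnDeriv γ q).add (Measure.measurable_rnDeriv γε q)).div_const 2
      set m : Measure (EuclideanSpace ℝ (Fin d) × EuclideanSpace ℝ (Fin d)) :=
        q.withDensity ρm with hmdef
      have hadd_meas : Measurable (fun x => γ.rnDeriv q x + γε.rnDeriv q x) :=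
        (Measure.measurable_rnDeriv γ q).add (Measure.measurable_rnDeriv γε q)
      have hρm_eq : ρm = (2:ℝ≥0∞)⁻¹ • (fun x => γ.rnDeriv q x + γε.rnDeriv q x) := by
        funext x
        simp only [hρmdef, Pi.smul_apply, smul_eq_mul, div_eq_mul_inv, mul_comm]
      have hmeq : m = (2:ℝ≥0∞)⁻¹ • γ + (2:ℝ≥0∞)⁻¹ • γε := by
        rw [hmdef, hρm_eq, withDensity_smul _ hadd_meas]
        have hadd : q.withDensity (fun x => γ.rnDeriv q x + γε.rnDeriv q x)
            = q.withDensity (γ.rnDeriv q) + q.withDensity (γε.rnDeriv q) :=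
          withDensity_add_left (Measure.measurable_rnDeriv γ q) _
        rw [hadd, Measure.withDensity_rnDeriv_eq γ q hac, Measure.withDensity_rnDeriv_eq γε q hacε,
          smul_add]
      have hmprob : IsProbabilityMeasure m := by
        constructor
        rw [hmeq]
        simp only [Measure.coe_add, Measure.coe_smul, Pi.add_apply, Pi.smul_apply,
          smul_eq_mul, measure_univ, mul_one]
        exact ENNReal.inv_two_add_inv_two
      have hsmul_fst : ∀ (ν : Measure (EuclideanSpace ℝ (Fin d) × EuclideanSpace ℝ (Fin d)))
          (r : ℝ≥0∞), (r • ν).fst = r • ν.fst := fun ν r => Measure.map_smul r ν Prod.fst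
      have hsmul_snd : ∀ (ν : Measure (EuclideanSpace ℝ (Fin d) × EuclideanSpace ℝ (Fin d)))
          (r : ℝ≥0∞), (r • ν).snd = r • ν.snd := fun ν r => Measure.map_smul r ν Prod.snd
      have hmfst : m.fst = μm := by
        rw [hmeq, Measure.fst_add, hsmul_fst, hsmul_fst, hγf, hfst, ← add_smul,
          ENNReal.inv_two_add_inv_two, one_smul]
      have hmsnd : m.snd = μp := by
        rw [hmeq, Measure.snd_add, hsmul_snd, hsmul_snd, hγs, hsnd, ← add_smul,
          ENNReal.inv_two_add_inv_two, one_smul]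
      -- density of the midpoint
      have hfm_ae : (fun x => ((m.rnDeriv q) x).toReal) =ᵐ[q] (fun x => (f x + fε x) / 2) := by
        filter_upwards [Measure.rnDeriv_withDensity q hρm_meas, Measure.rnDeriv_lt_top γ q,
          Measure.rnDeriv_lt_top γε q] with x h1 h2 h3
        rw [hmdef, h1]
        simp only [hρmdef]
        rw [ENNReal.toReal_div, ENNReal.toReal_add h2.ne h3.ne]
        norm_num
        rfl
      set gm := fun x => ((f x + fε x) / 2) * Real.log ((f x + fε x) / 2) with hgmdef
      have hmid_meas : Measurable (fun x => (f x + fε x) / 2) := (hfmeas.add hfεmeas).div_const 2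
      have hgm_meas : Measurable gm := hmid_meas.mul (Real.measurable_log.comp hmid_meas)
      have hmid0 : ∀ x, 0 ≤ (f x + fε x) / 2 := fun x => by
        have := hf0 x; have := hfε0 x; linarith
      have hgm_lb : ∀ x, -1 ≤ gm x := fun x => mul_log_ge_neg_one (hmid0 x)
      have hgm_ub : ∀ x, gm x ≤ (f x * Real.log (f x) + fε x * Real.log (fε x)) / 2 :=
        fun x => by
          simp only [hgmdef]
          have := phi_gap_nonneg (hf0 x) (hfε0 x); linarith
      have hφ_lb : ∀ x, -1 ≤ f x * Real.log (f x) := fun x => mul_log_ge_neg_one (hf0 x)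
      have hφε_lb : ∀ x, -1 ≤ fε x * Real.log (fε x) := fun x => mul_log_ge_neg_one (hfε0 x)
      have hgmint : Integrable gm q := by
        refine Integrable.mono' (((hφint.add hφεint).div_const 2).add (integrable_const 2))
          hgm_meas.aestronglyMeasurable (ae_of_all _ fun x => ?_)
        have h1 := hgm_lb x; have h2 := hgm_ub x
        have h3 := hφ_lb x; have h4 := hφε_lb x
        rw [Real.norm_eq_abs, abs_le]
        constructor
        · simp only [Pi.add_apply]; linarith
        · simp only [Pi.add_apply]; linarith
      have hfmφ_ae : (fun x => ((m.rnDeriv q) x).toReal * Real.log ((m.rnDeriv q) x).toReal)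
          =ᵐ[q] gm := by
        filter_upwards [hfm_ae] with x hx
        rw [hx]
      have hmac : m ≪ q := by rw [hmdef]; exact withDensity_absolutelyContinuous q ρm
      have hEntm : Ent m q = ((∫ x, gm x ∂q : ℝ) : EReal) := by
        rw [Ent, if_pos ⟨hmac, (integrable_congr hfmφ_ae).2 hgmint⟩, integral_congr_ae hfmφ_ae]
      set Em := ∫ x, gm x ∂q with hEmdef
      -- cost of the midpoint
      have hCm : ∫ p, c p ∂m = (Cγ + Cε) / 2 := by
        rw [hmeq, integral_add_measure ((hcint γ hγp hγf hγs).smul_measure (by simp))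
          ((hcint γε hprob hfst hsnd).smul_measure (by simp)),
          integral_smul_measure, integral_smul_measure]
        rw [← hCγdef, ← hCεdef]
        simp only [ENNReal.toReal_inv, ENNReal.toReal_ofNat, smul_eq_mul]
        ring
      -- near-optimality inequality for the midpoint
      have hvm := hle ε m hmprob hmfst hmsnd
      rw [hveps, hEntm, ← EReal.coe_mul, ← EReal.coe_add, EReal.coe_le_coe_iff, hCm] at hvm
      -- the entropy gap
      set g := fun x => (f x * Real.log (f x) + fε x * Real.log (fε x)) / 2
        - ((f x + fε x) / 2) * Real.log ((f x + fε x) / 2) with hgdef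
      have hgint : Integrable g q := ((hφint.add hφεint).div_const 2).sub hgmint
      have hg0 : ∀ x, 0 ≤ g x := fun x => phi_gap_nonneg (hf0 x) (hfε0 x)
      have hg_meas : Measurable g :=
        ((((hfmeas.mul (Real.measurable_log.comp hfmeas)).add
          (hfεmeas.mul (Real.measurable_log.comp hfεmeas))).div_const 2).sub hgm_meas)
      have hGtot : ∫ x, g x ∂q = (Eg + EεR) / 2 - Em := by
        have h1 : Integrable (fun x =>
            (f x * Real.log (f x) + fε x * Real.log (fε x)) / 2) q :=
          (hφint.add hφεint).div_const 2
        have hgsplit : ∫ x, g x ∂q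
            = (∫ x, (f x * Real.log (f x) + fε x * Real.log (fε x)) / 2 ∂q)
              - ∫ x, gm x ∂q := by
          rw [← integral_sub h1 hgmint]
        rw [hgsplit, integral_div, integral_add hφint hφεint, ← hEgdef, ← hEεRdef, ← hEmdef]
      -- Cauchy–Schwarz step
      set F := fun x => Real.sqrt (24 * g x) with hFdef
      set G := fun x => Real.sqrt (f x + fε x) with hGdef
      have hF2 : Integrable (fun x => F x ^ 2) q := by
        refine (integrable_congr (ae_of_all _ fun x => ?_)).2 (hgint.const_mul 24)
        simp only [hFdef]
        rw [Real.sq_sqrt (by have := hg0 x; linarith)]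
      have hG2 : Integrable (fun x => G x ^ 2) q := by
        refine (integrable_congr (ae_of_all _ fun x => ?_)).2 (hfint.add hfεint)
        simp only [hGdef]
        rw [Real.sq_sqrt (by have := hf0 x; have := hfε0 x; linarith)]
        simp only [Pi.add_apply]
      have hFG : Integrable (fun x => F x * G x) q := by
        refine Integrable.mono' ((hF2.add hG2).div_const 2)
          (((Real.continuous_sqrt.measurable.comp (hg_meas.const_mul 24)).mul
            (Real.continuous_sqrt.measurable.comp (hfmeas.add hfεmeas))).aestronglyMeasurable)
          (ae_of_all _ fun x => ?_)
        have h1 : 0 ≤ F x := Real.sqrt_nonneg _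
        have h2 : 0 ≤ G x := Real.sqrt_nonneg _
        rw [Real.norm_eq_abs, abs_of_nonneg (mul_nonneg h1 h2)]
        simp only [Pi.add_apply]
        nlinarith [sq_nonneg (F x - G x)]
      have hCS := integral_cauchy_schwarz q hF2 hG2 hFG
      have hintF2 : ∫ x, F x ^ 2 ∂q = 24 * ((Eg + EεR) / 2 - Em) := by
        have heq : (fun x => F x ^ 2) = fun x => 24 * g x := funext fun x => by
          simp only [hFdef]
          exact Real.sq_sqrt (by have := hg0 x; linarith)
        rw [heq, integral_const_mul, hGtot]
      have hintG2 : ∫ x, G x ^ 2 ∂q = 2 := by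
        have heq : (fun x => G x ^ 2) = fun x => f x + fε x := funext fun x => by
          simp only [hGdef]
          exact Real.sq_sqrt (by have := hf0 x; have := hfε0 x; linarith)
        rw [heq, integral_add hfint hfεint, hintf, hintfε]
        norm_num
      have hTle : T ≤ ∫ x, F x * G x ∂q := by
        rw [hTdef]
        apply integral_mono habsint hFG
        intro x
        have h24 : 0 ≤ 24 * g x := by have := hg0 x; linarith
        rw [hFdef, hGdef]
        simp only
        rw [← Real.sqrt_mul h24]
        rw [← Real.sqrt_sq_eq_abs]
        apply Real.sqrt_le_sqrt
        have := phi_gap (hf0 x) (hfε0 x)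
        calc (f x - fε x) ^ 2 ≤ 24 * ((f x * Real.log (f x) + fε x * Real.log (fε x)) / 2
              - ((f x + fε x) / 2) * Real.log ((f x + fε x) / 2)) * (f x + fε x) := this
          _ = 24 * g x * (f x + fε x) := by rw [hgdef]
      have hFGnn : 0 ≤ ∫ x, F x * G x ∂q :=
        integral_nonneg fun x => mul_nonneg (Real.sqrt_nonneg _) (Real.sqrt_nonneg _)
      have hT2 : T ^ 2 ≤ 48 * ((Eg + EεR) / 2 - Em) := by
        rw [hintF2, hintG2] at hCS
        nlinarith
      have hεT : ε * T ^ 2 ≤ 24 * ((Cγ + ε * Eg) - (Cε + ε * EεR)) := by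
        have hG_ineq : ε * ((Eg + EεR) / 2 - Em) ≤ ((Cγ + ε * Eg) - (Cε + ε * EεR)) / 2 := by
          nlinarith
        nlinarith
      -- final algebra
      obtain ⟨hD2, hD1⟩ := abs_le.1 hDbound
      rw [← sub_nonneg]
      have hXξ : Cγ + t * Eg - ((Cε + ε * EεR) + (t - ε) * EεR - 12 * M ^ 2 / ε ^ 3 * (t - ε) ^ 2)
          = (ε ^ 3 * ((Cγ + t * Eg) - ((Cε + ε * EεR) + (t - ε) * EεR))
            + 12 * M ^ 2 * (t - ε) ^ 2) / ε ^ 3 := by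
        field_simp
        ring
      rw [hXξ]
      apply div_nonneg _ (by positivity)
      have hA : 0 ≤ (ε ^ 2 * ((Cγ + ε * Eg) - (Cε + ε * EεR))) * (ε + 2 * (t - ε)) :=
        mul_nonneg (mul_nonneg (sq_nonneg ε) hΔ) (by linarith)
      have hB : ε ^ 3 * (ε * T ^ 2) ≤ ε ^ 3 * (24 * ((Cγ + ε * Eg) - (Cε + ε * EεR))) :=
        mul_le_mul_of_nonneg_left hεT (by positivity)
      rcases le_or_gt 0 (t - ε) with hδ | hδ
      · have hC1 : (t - ε) * (Cγ - Cε) ≤ (t - ε) * (M * T) :=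
          mul_le_mul_of_nonneg_left hD1 hδ
        nlinarith [sq_nonneg (ε ^ 2 * T - 24 * M * (t - ε)),
          mul_le_mul_of_nonneg_left hC1 (sq_nonneg ε)]
      · have hC1 : (t - ε) * (Cγ - Cε) ≤ (t - ε) * (-(M * T)) :=
          mul_le_mul_of_nonpos_left hD2 hδ.le
        nlinarith [sq_nonneg (ε ^ 2 * T + 24 * M * (t - ε)),
          mul_le_mul_of_nonneg_left hC1 (sq_nonneg ε)]
    · -- UPPER BOUND
      have h := hle t γε hprob hfst hsnd
      rw [hEntε, ← EReal.coe_mul, ← EReal.coe_add] at h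
      have heq : (∫ p, c p ∂γε) + t * EεR = (Cε + ε * EεR) + (t - ε) * EεR := by
        rw [← hCεdef]; ring
      rwa [heq] at h
  -- CONCLUSION
  have hKnn : (0:ℝ) ≤ 12 * M ^ 2 / ε ^ 3 := by positivity
  have hreal : ∀ t : ℝ, |t - ε| ≤ ε / 2 →
      |(entCost μm μp c t).toReal - ((Cε + ε * EεR) + (t - ε) * EεR)|
        ≤ (12 * M ^ 2 / ε ^ 3) * (t - ε) ^ 2 := by
    intro t ht
    obtain ⟨h1, h2⟩ := key t ht
    have hne_top : entCost μm μp c t ≠ ⊤ := by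
      intro h
      rw [h] at h2
      exact absurd ((EReal.coe_lt_top _).trans_le h2) (lt_irrefl _)
    have hne_bot : entCost μm μp c t ≠ ⊥ := by
      intro h
      rw [h] at h1
      exact absurd (h1.trans_lt (EReal.bot_lt_coe _)) (lt_irrefl _)
    rw [← EReal.coe_toReal hne_top hne_bot, EReal.coe_le_coe_iff] at h2
    rw [← EReal.coe_toReal hne_top hne_bot, EReal.coe_le_coe_iff] at h1
    have hsq : 0 ≤ (12 * M ^ 2 / ε ^ 3) * (t - ε) ^ 2 := by positivity
    rw [abs_le]
    constructor <;> linarith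
  have hval : (entCost μm μp c ε).toReal = Cε + ε * EεR := by
    rw [hveps]; exact rfl
  have hEnttoReal : (Ent γε q).toReal = EεR := by rw [hEntε]; exact rfl
  rw [hEnttoReal, hasDerivAt_iff_isLittleO, Asymptotics.isLittleO_iff]
  intro C hC
  set Kc := 12 * M ^ 2 / ε ^ 3 with hKcdef
  have hbpos : 0 < min (ε / 2) (C / (Kc + 1)) := by
    apply lt_min (by linarith)
    positivity
  filter_upwards [Metric.ball_mem_nhds ε hbpos] with t htb
  rw [Metric.mem_ball, Real.dist_eq] at htb
  have htb1 : |t - ε| ≤ ε / 2 := (le_of_lt htb).trans (min_le_left _ _)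
  have htb2 : |t - ε| ≤ C / (Kc + 1) := (le_of_lt htb).trans (min_le_right _ _)
  have h := hreal t htb1
  rw [hval]
  have habs : 0 ≤ |t - ε| := abs_nonneg _
  have hexp : (entCost μm μp c t).toReal - (Cε + ε * EεR) - (t - ε) • EεR
      = (entCost μm μp c t).toReal - ((Cε + ε * EεR) + (t - ε) * EεR) := by
    rw [smul_eq_mul]; ring
  rw [Real.norm_eq_abs, Real.norm_eq_abs, hexp]
  have hsq : (t - ε) ^ 2 = |t - ε| * |t - ε| := by rw [abs_mul_abs_self]; ring
  calc |(entCost μm μp c t).toReal - ((Cε + ε * EεR) + (t - ε) * EεR)|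
      ≤ Kc * (t - ε) ^ 2 := h
    _ = Kc * |t - ε| * |t - ε| := by rw [hsq]; ring
    _ ≤ (Kc + 1) * (C / (Kc + 1)) * |t - ε| := by
        apply mul_le_mul_of_nonneg_right _ habs
        apply mul_le_mul (by linarith) htb2 habs (by linarith)
    _ = C * |t - ε| := by field_simp
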